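/- Let d ≥ 0, fix 0 ≤ j_0 ≤ m, and let μ = x_{j_0}^{a_{j_0}} ⋯ x_m^{a_m} ∈ M̄_{d, j_0}. Then: (i) FB_i(μ) = 0 for every i ≥ j_0 + 1; (ii) FB(μ) = Σ_{i=0}^{j_0} FB_i(μ); (iii) if moreover d ≤ w_1 q, then for every i ≤ j_0 such that w_0 = ⋯ = w_i = 1, FB_i(μ) = ∏_{j=i+1}^{m} (q − a_j). -/

import Mathlib

open MvPolynomial

noncomputable section

/-- `pSum q k = 1 + q + ⋯ + q^(k-1)`; so `p_m = pSum q (m+1)`. -/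
def pSum (q k : ℕ) : ℕ := ∑ i ∈ Finset.range k, q ^ i

/-- Equivalence of nonzero vectors under weighted scaling by the algebraic closure. -/
def wRel (F : Type) [Field F] {m : ℕ} (w : Fin (m + 1) → ℕ)
    (x y : {v : Fin (m + 1) → AlgebraicClosure F // v ≠ 0}) : Prop :=
  ∃ lam : (AlgebraicClosure F)ˣ, ∀ i, y.1 i = (lam : AlgebraicClosure F) ^ w i * x.1 i

/-- The weighted projective space `ℙ(w)` as set of orbits. -/
def PW (F : Type) [Field F] {m : ℕ} (w : Fin (m + 1) → ℕ) : Type :=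
  Quot (wRel F w)

def PW.mk (F : Type) [Field F] {m : ℕ} (w : Fin (m + 1) → ℕ)
    (x : {v : Fin (m + 1) → AlgebraicClosure F // v ≠ 0}) : PW F w :=
  Quot.mk _ x

/-- The `𝔽_q`-rational points of `ℙ(w)`: orbits fixed by coordinatewise Frobenius. -/
def ratPts (F : Type) [Field F] [Fintype F] {m : ℕ} (w : Fin (m + 1) → ℕ) :
    Set (PW F w) :=
  {c | ∃ x : {v : Fin (m + 1) → AlgebraicClosure F // v ≠ 0},
    PW.mk F w x = c ∧
    ∃ h : (fun i => x.1 i ^ Fintype.card F) ≠ (0 : Fin (m + 1) → AlgebraicClosure F),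
      PW.mk F w ⟨fun i => x.1 i ^ Fintype.card F, h⟩ = c}

/-- `V_{ℙ(w)}(f)(𝔽_q)`: the rational points at which `f` vanishes. -/
def vanishSet (F : Type) [Field F] [Fintype F] {m : ℕ} (w : Fin (m + 1) → ℕ)
    (f : MvPolynomial (Fin (m + 1)) F) : Set (PW F w) :=
  {c | c ∈ ratPts F w ∧ ∀ x, PW.mk F w x = c →
    MvPolynomial.eval x.1 (MvPolynomial.map (algebraMap F (AlgebraicClosure F)) f) = 0}

/-- `e_q(d; w)`: the maximal number of rational zeroes of a nonzero
weighted homogeneous polynomial of degree `d`. -/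
def eMax (F : Type) [Field F] [Fintype F] {m : ℕ} (w : Fin (m + 1) → ℕ) (d : ℕ) : ℕ :=
  sSup {n | ∃ f : MvPolynomial (Fin (m + 1)) F,
    f ≠ 0 ∧ MvPolynomial.IsWeightedHomogeneous w f d ∧ n = (vanishSet F w f).ncard}

/-- weighted degree of a monomial (exponent vector). -/
def wdeg {m : ℕ} (w : Fin (m + 1) → ℕ) (a : Fin (m + 1) →₀ ℕ) : ℕ := ∑ i, w i * a i

/-- degree-lexicographic order (weighted degree first, `x_0 < x_1 < ⋯ < x_m`). -/
def dlexLt {m : ℕ} (w : Fin (m + 1) → ℕ) (a b : Fin (m + 1) →₀ ℕ) : Prop :=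
  wdeg w a < wdeg w b ∨
    (wdeg w a = wdeg w b ∧ ∃ i, a i < b i ∧ ∀ j, i < j → a j = b j)

/-- `a` is the initial monomial of `f` for the weighted deglex order. -/
def IsInitial (F : Type) [Field F] {m : ℕ} (w : Fin (m + 1) → ℕ)
    (f : MvPolynomial (Fin (m + 1)) F) (a : Fin (m + 1) →₀ ℕ) : Prop :=
  a ∈ f.support ∧ ∀ b ∈ f.support, b ≠ a → dlexLt w b a

/-- The vanishing ideal `I(ℙ(w)(𝔽_q))`, generated by the homogeneous polynomials
vanishing at every rational point. -/
def vanishingIdeal (F : Type) [Field F] [Fintype F] {m : ℕ} (w : Fin (m + 1) → ℕ) :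
    Ideal (MvPolynomial (Fin (m + 1)) F) :=
  Ideal.span {g | (∃ e, MvPolynomial.IsWeightedHomogeneous w g e) ∧
    ∀ c ∈ ratPts F w, ∀ x, PW.mk F w x = c →
      MvPolynomial.eval x.1 (MvPolynomial.map (algebraMap F (AlgebraicClosure F)) g) = 0}

/-- `M̄`: monomials divisible by no initial monomial of a nonzero homogeneous
element of the vanishing ideal. -/
def Mbar (F : Type) [Field F] [Fintype F] {m : ℕ} (w : Fin (m + 1) → ℕ) :
    Set (Fin (m + 1) →₀ ℕ) :=
  {a | ¬ ∃ g : MvPolynomial (Fin (m + 1)) F, g ≠ 0 ∧ g ∈ vanishingIdeal F w ∧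
    (∃ e, MvPolynomial.IsWeightedHomogeneous w g e) ∧ ∃ b, IsInitial F w g b ∧ b ≤ a}

/-- `M̄_d`. -/
def MbarD (F : Type) [Field F] [Fintype F] {m : ℕ} (w : Fin (m + 1) → ℕ) (d : ℕ) :
    Set (Fin (m + 1) →₀ ℕ) :=
  {a ∈ Mbar F w | wdeg w a = d}

/-- `M̄_{d,i}`. -/
def MbarDI (F : Type) [Field F] [Fintype F] {m : ℕ} (w : Fin (m + 1) → ℕ) (d : ℕ)
    (i : Fin (m + 1)) : Set (Fin (m + 1) →₀ ℕ) :=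
  {a ∈ MbarD F w d | (∀ t, t < i → a t = 0) ∧ 1 ≤ a i}

/-- The regularity set `reg(ℙ(w)(𝔽_q)) = {d ≥ 1 : |M̄_d| = p_m}`. -/
def regSet (F : Type) [Field F] [Fintype F] {m : ℕ} (w : Fin (m + 1) → ℕ) : Set ℕ :=
  {d | 1 ≤ d ∧ (MbarD F w d).ncard = pSum (Fintype.card F) (m + 1)}

/-- Footprint bound at level `dtil`: number of monomials of `M̄_{dtil}` divisible by `a`. -/
def FB (F : Type) [Field F] [Fintype F] {m : ℕ} (w : Fin (m + 1) → ℕ) (dtil : ℕ)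
    (a : Fin (m + 1) →₀ ℕ) : ℕ :=
  {b | b ∈ MbarD F w dtil ∧ a ≤ b}.ncard

/-- `FB_i`: number of monomials of `M̄_{dtil, i}` divisible by `a`. -/
def FBi (F : Type) [Field F] [Fintype F] {m : ℕ} (w : Fin (m + 1) → ℕ) (dtil : ℕ)
    (i : Fin (m + 1)) (a : Fin (m + 1) →₀ ℕ) : ℕ :=
  {b | b ∈ MbarDI F w dtil i ∧ a ≤ b}.ncard

/-- Hilbert function of `𝔽_q[x]/I(ℙ(w)(𝔽_q))` at degree `d`. -/
def hilb (F : Type) [Field F] [Fintype F] {m : ℕ} (w : Fin (m + 1) → ℕ) (d : ℕ) : ℕ :=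
  Module.finrank F
    (↥(weightedHomogeneousSubmodule F w d) ⧸
      (Submodule.comap (weightedHomogeneousSubmodule F w d).subtype
        (Submodule.restrictScalars F (vanishingIdeal F w))))

/-- Denumerant: the number of representations `d = w0*i0 + w1*i1`. -/
def den (w0 w1 d : ℕ) : ℕ := {p : ℕ × ℕ | w0 * p.1 + w1 * p.2 = d}.ncard


section Chunk4

variable {F : Type} [Field F] [Fintype F] {m : ℕ} {w : Fin (m + 1) → ℕ}

local notation "K" => AlgebraicClosure F

theorem wrel_equiv : Equivalence (wRel F w) := by
  constructor
  · intro x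
    exact ⟨1, fun i => by simp⟩
  · rintro x y ⟨l, hl⟩
    refine ⟨l⁻¹, fun i => ?_⟩
    rw [hl i, ← mul_assoc, ← mul_pow]
    norm_cast
    simp
  · rintro x y z ⟨l, hl⟩ ⟨l', hl'⟩
    refine ⟨l' * l, fun i => ?_⟩
    rw [hl' i, hl i, ← mul_assoc, ← mul_pow]
    norm_cast

theorem wrel_of_mk_eq {x y : {v : Fin (m + 1) → K // v ≠ 0}}
    (h : PW.mk F w x = PW.mk F w y) : wRel F w x y :=
  (Equivalence.eqvGen_iff wrel_equiv).mp (Quot.eqvGen_exact h)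

theorem exists_frob {c : PW F w} (hc : c ∈ ratPts F w)
    (x : {v : Fin (m + 1) → K // v ≠ 0}) (hx : PW.mk F w x = c) :
    ∃ ν : Kˣ, ∀ t, x.1 t ^ (Fintype.card F) = (ν : K) ^ w t * x.1 t := by
  obtain ⟨x₀, h₀, hne, h₁⟩ := hc
  set q := Fintype.card F with hq
  have hq1 : 1 ≤ q := Fintype.card_pos
  obtain ⟨l, hl⟩ := wrel_of_mk_eq (w := w) (h₀.trans hx.symm)
  obtain ⟨μ, hμ⟩ := wrel_of_mk_eq (w := w) (h₀.trans h₁.symm)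
  refine ⟨l ^ (q - 1) * μ, fun t => ?_⟩
  have hμt : x₀.1 t ^ q = (μ : K) ^ w t * x₀.1 t := hμ t
  have hlt : x.1 t = (l : K) ^ w t * x₀.1 t := hl t
  rw [hlt, mul_pow, ← pow_mul, hμt]
  push_cast
  have harith : (q - 1) * w t + w t = w t * q := by
    have h' : (q - 1) + 1 = q := by omega
    calc (q - 1) * w t + w t = ((q-1) + 1) * w t := by ring
    _ = q * w t := by rw [h']
    _ = w t * q := by ring
  have h1 : (l:K) ^ (w t * q) = (l:K) ^ ((q-1) * w t) * (l:K) ^ (w t) := by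
    rw [← pow_add, harith]
  rw [h1, mul_pow, pow_mul]
  ring

-- wdeg helper lemmas
theorem wdeg_weight (a : Fin (m+1) →₀ ℕ) : (Finsupp.weight w) a = wdeg w a := by
  rw [Finsupp.weight_apply, Finsupp.sum_fintype]
  · unfold wdeg
    exact Finset.sum_congr rfl fun t _ => by rw [smul_eq_mul, mul_comm]
  · intro i; rw [zero_smul]

theorem wdeg_add (u v : Fin (m+1) →₀ ℕ) : wdeg w (u + v) = wdeg w u + wdeg w v := by
  unfold wdeg
  rw [← Finset.sum_add_distrib]
  exact Finset.sum_congr rfl fun t _ => by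
    rw [Finsupp.add_apply, Nat.mul_add]

theorem wdeg_single (i : Fin (m+1)) (c : ℕ) : wdeg w (Finsupp.single i c) = w i * c := by
  unfold wdeg
  rw [Finset.sum_eq_single i]
  · rw [Finsupp.single_eq_same]
  · intro t _ ht
    rw [Finsupp.single_eq_of_ne' (Ne.symm ht), Nat.mul_zero]
  · intro h
    exact absurd (Finset.mem_univ i) h

theorem wdeg_zero : wdeg w 0 = 0 := by
  unfold wdeg; simp

theorem pow_step {q : ℕ} (hq : 2 ≤ q) {x : K} {ν : Kˣ} {W : ℕ}
    (hx : x ^ q = (ν : K) ^ W * x) {u v : ℕ} (hle : v ≤ u)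
    (h0 : u = 0 ↔ v = 0) (hmod : u ≡ v [MOD q - 1]) :
    x ^ u = x ^ v * (ν : K) ^ (W * ((u - v) / (q-1))) := by
  rcases Nat.eq_zero_or_pos v with hv0 | hv1
  · have hu0 : u = 0 := h0.mpr hv0
    subst hv0; subst hu0
    simp
  rcases eq_or_ne x 0 with hx0 | hxne
  · subst hx0
    rw [zero_pow (by omega), zero_pow (by omega), zero_mul]
  · have hx1 : x ^ (q - 1) = (ν : K) ^ W := by
      have h2 : x ^ ((q-1)+1) = (ν : K) ^ W * x := by
        rw [show (q-1)+1 = q by omega]; exact hx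
      rw [pow_succ] at h2
      exact mul_right_cancel₀ hxne h2
    have hdvd : (q - 1) ∣ (u - v) := (Nat.modEq_iff_dvd' hle).mp hmod.symm
    have huv : v + (q-1) * ((u - v) / (q-1)) = u := by
      rw [Nat.mul_div_cancel' hdvd]; omega
    calc x ^ u = x ^ (v + (q-1) * ((u-v)/(q-1))) := by rw [huv]
    _ = x ^ v * (x ^ (q-1)) ^ ((u-v)/(q-1)) := by rw [pow_add, pow_mul]
    _ = x ^ v * ((ν:K) ^ W) ^ ((u-v)/(q-1)) := by rw [hx1]
    _ = x ^ v * (ν:K) ^ (W * ((u-v)/(q-1))) := by rw [← pow_mul]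

theorem eval_prod_eq {q : ℕ} (hq : 2 ≤ q) (x : Fin (m+1) → K) (ν : Kˣ)
    (hfr : ∀ t, x t ^ q = (ν : K) ^ w t * x t)
    (u v : Fin (m+1) →₀ ℕ) (h0 : ∀ t, u t = 0 ↔ v t = 0)
    (hmod : ∀ t, u t ≡ v t [MOD q - 1]) (hdeg : wdeg w u = wdeg w v) :
    ∏ t, x t ^ u t = ∏ t, x t ^ v t := by
  set k : Fin (m+1) → ℕ := fun t => (u t - v t) / (q-1) with hk
  set l : Fin (m+1) → ℕ := fun t => (v t - u t) / (q-1) with hl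
  have step : ∀ t, x t ^ u t * (ν:K) ^ (w t * l t)
      = x t ^ v t * (ν:K) ^ (w t * k t) := by
    intro t
    rcases le_total (v t) (u t) with hle | hle
    · have h1 := pow_step hq (hfr t) hle (h0 t) (hmod t)
      have hl0 : l t = 0 := by
        simp only [hl]
        have : v t - u t = 0 := by omega
        rw [this, Nat.zero_div]
      rw [hl0, Nat.mul_zero, pow_zero, mul_one, h1]
    · have h1 := pow_step hq (hfr t) hle (Iff.symm (h0 t)) (hmod t).symm
      have hk0 : k t = 0 := by
        simp only [hk]
        have : u t - v t = 0 := by omega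
        rw [this, Nat.zero_div]
      rw [hk0, Nat.mul_zero, pow_zero, mul_one, h1]
  have hprod : (∏ t, x t ^ u t) * (ν:K) ^ (∑ t, w t * l t)
      = (∏ t, x t ^ v t) * (ν:K) ^ (∑ t, w t * k t) := by
    rw [← Finset.prod_pow_eq_pow_sum, ← Finset.prod_pow_eq_pow_sum,
      ← Finset.prod_mul_distrib, ← Finset.prod_mul_distrib]
    exact Finset.prod_congr rfl fun t _ => step t
  have hsums : (∑ t, w t * l t) = (∑ t, w t * k t) := by
    have hdvd : ∀ t, (q-1) ∣ (u t - v t) := by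
      intro t
      rcases le_total (v t) (u t) with hle | hle
      · exact (Nat.modEq_iff_dvd' hle).mp (hmod t).symm
      · have : u t - v t = 0 := by omega
        rw [this]; exact dvd_zero _
    have hdvd' : ∀ t, (q-1) ∣ (v t - u t) := by
      intro t
      rcases le_total (u t) (v t) with hle | hle
      · exact (Nat.modEq_iff_dvd' hle).mp (hmod t)
      · have : v t - u t = 0 := by omega
        rw [this]; exact dvd_zero _
    have hA : (q-1) * (∑ t, w t * k t) = ∑ t, w t * (u t - v t) := by
      rw [Finset.mul_sum]
      refine Finset.sum_congr rfl fun t _ => ?_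
      rw [hk]
      rw [show (q-1) * (w t * ((u t - v t)/(q-1))) = w t * ((q-1) * ((u t - v t)/(q-1))) by ring]
      rw [Nat.mul_div_cancel' (hdvd t)]
    have hB : (q-1) * (∑ t, w t * l t) = ∑ t, w t * (v t - u t) := by
      rw [Finset.mul_sum]
      refine Finset.sum_congr rfl fun t _ => ?_
      rw [hl]
      rw [show (q-1) * (w t * ((v t - u t)/(q-1))) = w t * ((q-1) * ((v t - u t)/(q-1))) by ring]
      rw [Nat.mul_div_cancel' (hdvd' t)]
    have hmin1 : ∑ t, (w t * (u t - v t) + w t * min (u t) (v t)) = wdeg w u := by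
      unfold wdeg
      refine Finset.sum_congr rfl fun t _ => ?_
      rw [← Nat.mul_add]
      congr 1
      omega
    have hmin2 : ∑ t, (w t * (v t - u t) + w t * min (u t) (v t)) = wdeg w v := by
      unfold wdeg
      refine Finset.sum_congr rfl fun t _ => ?_
      rw [← Nat.mul_add]
      congr 1
      omega
    rw [Finset.sum_add_distrib] at hmin1 hmin2
    have : ∑ t, w t * (u t - v t) = ∑ t, w t * (v t - u t) := by omega
    have heq : (q-1) * (∑ t, w t * k t) = (q-1) * (∑ t, w t * l t) := by
      rw [hA, hB]; omega
    exact (Nat.eq_of_mul_eq_mul_left (by omega) heq).symm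
  rw [hsums] at hprod
  exact mul_right_cancel₀ (pow_ne_zero _ (Units.ne_zero ν)) hprod


theorem dlex_total {u v : Fin (m+1) →₀ ℕ} (hne : u ≠ v) (hdeg : wdeg w u = wdeg w v) :
    dlexLt w u v ∨ dlexLt w v u := by
  classical
  set s := Finset.univ.filter (fun t : Fin (m+1) => u t ≠ v t) with hs
  have hsne : s.Nonempty := by
    by_contra hemp
    rw [Finset.not_nonempty_iff_eq_empty] at hemp
    apply hne
    ext t
    by_contra hut
    have : t ∈ s := by rw [hs]; simp [hut]
    rw [hemp] at this
    exact absurd this (Finset.notMem_empty t)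
  set i := s.max' hsne with hi
  have hiu : u i ≠ v i := (Finset.mem_filter.mp (s.max'_mem hsne)).2
  have hmax : ∀ j, i < j → u j = v j := by
    intro j hj
    by_contra hne'
    have hjs : j ∈ s := by rw [hs]; simp [hne']
    have := Finset.le_max' s j hjs
    omega
  rcases lt_or_gt_of_ne hiu with h | h
  · exact Or.inl (Or.inr ⟨hdeg, i, h, hmax⟩)
  · exact Or.inr (Or.inr ⟨hdeg.symm, i, h, fun j hj => (hmax j hj).symm⟩)

theorem binomial_not_mem_Mbar (hq : 2 ≤ Fintype.card F)
    (u v : Fin (m+1) →₀ ℕ) (hne : u ≠ v) (h0 : ∀ t, u t = 0 ↔ v t = 0)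
    (hmod : ∀ t, u t ≡ v t [MOD Fintype.card F - 1]) (hdeg : wdeg w u = wdeg w v)
    (hvu : dlexLt w v u) (b : Fin (m+1) →₀ ℕ) (hub : u ≤ b) : b ∉ Mbar F w := by
  classical
  intro hb
  set g : MvPolynomial (Fin (m+1)) F := MvPolynomial.monomial u 1 - MvPolynomial.monomial v 1
    with hg
  have hcu : MvPolynomial.coeff u g = 1 := by
    rw [hg, MvPolynomial.coeff_sub, MvPolynomial.coeff_monomial, MvPolynomial.coeff_monomial,
      if_pos rfl, if_neg (Ne.symm hne)]
    ring
  have hcv : MvPolynomial.coeff v g = -1 := by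
    rw [hg, MvPolynomial.coeff_sub, MvPolynomial.coeff_monomial, MvPolynomial.coeff_monomial,
      if_neg hne, if_pos rfl]
    ring
  have hcother : ∀ d, d ≠ u → d ≠ v → MvPolynomial.coeff d g = 0 := by
    intro d hdu hdv
    rw [hg, MvPolynomial.coeff_sub, MvPolynomial.coeff_monomial, MvPolynomial.coeff_monomial,
      if_neg (fun h => hdu h.symm), if_neg (fun h => hdv h.symm)]
    ring
  have hgne : g ≠ 0 := by
    intro h
    rw [h, MvPolynomial.coeff_zero] at hcu
    exact one_ne_zero hcu.symm
  have hhom : MvPolynomial.IsWeightedHomogeneous w g (wdeg w u) := by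
    intro d hd
    rcases eq_or_ne d u with rfl | hdu
    · exact wdeg_weight d
    rcases eq_or_ne d v with rfl | hdv
    · rw [wdeg_weight d]; exact hdeg.symm
    · exact absurd (hcother d hdu hdv) hd
  have hvan : ∀ c ∈ ratPts F w, ∀ x, PW.mk F w x = c →
      MvPolynomial.eval x.1 (MvPolynomial.map (algebraMap F K) g) = 0 := by
    intro c hc x hx
    obtain ⟨ν, hν⟩ := exists_frob hc x hx
    rw [hg, map_sub, MvPolynomial.map_monomial, MvPolynomial.map_monomial, map_one]
    rw [map_sub]
    have he : ∀ (s : Fin (m+1) →₀ ℕ),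
        MvPolynomial.eval x.1 (MvPolynomial.monomial s (1 : K)) = ∏ t, x.1 t ^ s t := by
      intro s
      rw [MvPolynomial.eval_monomial, one_mul]
      rw [Finsupp.prod_fintype]
      intro i; exact pow_zero _
    rw [he u, he v]
    rw [eval_prod_eq hq x.1 ν hν u v h0 hmod hdeg]
    ring
  have hinit : IsInitial F w g u := by
    constructor
    · rw [MvPolynomial.mem_support_iff, hcu]; exact one_ne_zero
    · intro b' hb' hbu
      have : b' = v := by
        by_contra hbv
        rw [MvPolynomial.mem_support_iff] at hb'
        exact hb' (hcother b' hbu hbv)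
      rw [this]
      exact hvu
  exact hb ⟨g, hgne, Ideal.subset_span ⟨⟨wdeg w u, hhom⟩, hvan⟩, ⟨wdeg w u, hhom⟩, u, hinit, hub⟩

theorem mbar_eq_of_class_eq (hq : 2 ≤ Fintype.card F) {b b' : Fin (m+1) →₀ ℕ}
    (hb : b ∈ Mbar F w) (hb' : b' ∈ Mbar F w) (hdeg : wdeg w b = wdeg w b')
    (h0 : ∀ t, b t = 0 ↔ b' t = 0)
    (hmod : ∀ t, b t ≡ b' t [MOD Fintype.card F - 1]) : b = b' := by
  by_contra hne
  rcases dlex_total hne hdeg with h | h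
  · -- b < b', so b' is the initial
    exact (binomial_not_mem_Mbar hq b' b (Ne.symm hne) (fun t => (h0 t).symm)
      (fun t => (hmod t).symm) hdeg.symm h b' le_rfl) hb'
  · exact (binomial_not_mem_Mbar hq b b' hne h0 hmod hdeg h b le_rfl) hb

theorem mbar_bounded (hq : 2 ≤ Fintype.card F) {b : Fin (m+1) →₀ ℕ}
    (hb : b ∈ Mbar F w) {i j : Fin (m+1)} (hij : i < j) (hwi : w i = 1) (hbi : 1 ≤ b i) :
    b j ≤ Fintype.card F - 1 := by
  classical
  set q := Fintype.card F with hqd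
  by_contra hbj
  have hbj' : q ≤ b j := by omega
  have hijne : i ≠ j := ne_of_lt hij
  set u : Fin (m+1) →₀ ℕ := Finsupp.single i 1 + Finsupp.single j q with hu
  set v : Fin (m+1) →₀ ℕ := Finsupp.single i (1 + w j * (q-1)) + Finsupp.single j 1 with hv
  have hui : u i = 1 := by
    rw [hu, Finsupp.add_apply, Finsupp.single_eq_same, Finsupp.single_eq_of_ne' (Ne.symm hijne)]
    omega
  have huj : u j = q := by
    rw [hu, Finsupp.add_apply, Finsupp.single_eq_same, Finsupp.single_eq_of_ne' hijne]
    omega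
  have hut : ∀ t, t ≠ i → t ≠ j → u t = 0 := by
    intro t hti htj
    rw [hu, Finsupp.add_apply, Finsupp.single_eq_of_ne' (Ne.symm hti),
      Finsupp.single_eq_of_ne' (Ne.symm htj)]
    omega
  have hvi : v i = 1 + w j * (q-1) := by
    rw [hv, Finsupp.add_apply, Finsupp.single_eq_same, Finsupp.single_eq_of_ne' (Ne.symm hijne)]
    omega
  have hvj : v j = 1 := by
    rw [hv, Finsupp.add_apply, Finsupp.single_eq_same, Finsupp.single_eq_of_ne' hijne]
  have hvt : ∀ t, t ≠ i → t ≠ j → v t = 0 := by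
    intro t hti htj
    rw [hv, Finsupp.add_apply, Finsupp.single_eq_of_ne' (Ne.symm hti),
      Finsupp.single_eq_of_ne' (Ne.symm htj)]
    omega
  have hne : u ≠ v := by
    intro h
    have := DFunLike.congr_fun h j
    rw [huj, hvj] at this
    omega
  have h0 : ∀ t, u t = 0 ↔ v t = 0 := by
    intro t
    rcases eq_or_ne t i with rfl | hti
    · rw [hui, hvi]; omega
    rcases eq_or_ne t j with rfl | htj
    · rw [huj, hvj]; omega
    · rw [hut t hti htj, hvt t hti htj]
  have hmod : ∀ t, u t ≡ v t [MOD q - 1] := by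
    intro t
    rcases eq_or_ne t i with rfl | hti
    · rw [hui, hvi]
      refine (Nat.modEq_iff_dvd' (by omega)).mpr ?_
      have : 1 + w j * (q-1) - 1 = (q-1) * w j := by
        rw [Nat.add_sub_cancel_left, Nat.mul_comm]
      rw [this]
      exact Dvd.intro _ rfl
    rcases eq_or_ne t j with rfl | htj
    · rw [huj, hvj]
      exact ((Nat.modEq_iff_dvd' (by omega)).mpr dvd_rfl).symm
    · rw [hut t hti htj, hvt t hti htj]
  have hdeg : wdeg w u = wdeg w v := by
    rw [hu, hv, wdeg_add, wdeg_add, wdeg_single, wdeg_single, wdeg_single, wdeg_single]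
    rw [hwi]
    have : w j * q = w j * (q-1) + w j := by
      rw [← Nat.mul_succ]
      congr 1
      omega
    omega
  have hvu : dlexLt w v u := by
    refine Or.inr ⟨hdeg.symm, j, ?_, ?_⟩
    · rw [huj, hvj]; omega
    · intro t htj
      have hti : t ≠ i := by
        intro h
        rw [h] at htj
        exact absurd (hij.trans htj) (lt_irrefl i)
      rw [hut t hti (ne_of_gt htj), hvt t hti (ne_of_gt htj)]
  have hub : u ≤ b := by
    rw [Finsupp.le_def]
    intro t
    rcases eq_or_ne t i with rfl | hti
    · rw [hui]; exact hbi
    rcases eq_or_ne t j with rfl | htj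
    · rw [huj]; exact hbj'
    · rw [hut t hti htj]; omega
  exact (binomial_not_mem_Mbar hq u v hne h0 hmod hdeg hvu b hub) hb

theorem finite_wdeg (hpos : ∀ i, 1 ≤ w i) (dd : ℕ) :
    {b : Fin (m+1) →₀ ℕ | wdeg w b = dd}.Finite := by
  have hsub : {b : Fin (m+1) →₀ ℕ | wdeg w b = dd} ⊆
      (fun b : Fin (m+1) →₀ ℕ => (b : Fin (m+1) → ℕ)) ⁻¹'
        (Set.univ.pi fun _ : Fin (m+1) => Set.Iic dd) := by
    intro b hb
    simp only [Set.mem_preimage, Set.mem_pi, Set.mem_univ, forall_true_left, Set.mem_Iic]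
    intro t
    have h1 : w t * b t ≤ wdeg w b := by
      unfold wdeg
      exact Finset.single_le_sum (f := fun i => w i * b i) (fun i _ => Nat.zero_le _) (Finset.mem_univ t)
    have := hpos t
    have := hb
    simp only [Set.mem_setOf_eq] at this
    nlinarith [hpos t]
  refine Set.Finite.subset (Set.Finite.preimage ?_ ?_) hsub
  · intro a _ b _ h
    exact DFunLike.coe_injective h
  · exact Set.Finite.pi fun _ => Set.finite_Iic dd

theorem wdeg_split (b : Fin (m+1) →₀ ℕ) (i : Fin (m+1)) (hz : ∀ t, t < i → b t = 0) :
    wdeg w b = w i * b i + ∑ j ∈ Finset.univ.filter (fun j => i < j), w j * b j := by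
  classical
  unfold wdeg
  rw [← Finset.sum_filter_add_sum_filter_not Finset.univ (fun t => t < i)]
  have h1 : ∑ t ∈ Finset.univ.filter (fun t => t < i), w t * b t = 0 := by
    refine Finset.sum_eq_zero fun t ht => ?_
    rw [hz t (Finset.mem_filter.mp ht).2, Nat.mul_zero]
  have h2 : Finset.univ.filter (fun t => ¬ t < i) =
      insert i (Finset.univ.filter (fun j : Fin (m+1) => i < j)) := by
    ext t
    simp only [Finset.mem_filter, Finset.mem_univ, true_and, Finset.mem_insert]
    constructor
    · intro h
      rcases eq_or_ne t i with rfl | hne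
      · exact Or.inl rfl
      · exact Or.inr (lt_of_le_of_ne (le_of_not_gt h) (Ne.symm hne))
    · intro h
      rcases h with rfl | h
      · exact lt_irrefl t
      · exact not_lt_of_gt h
  rw [h1, h2, Finset.sum_insert (by simp)]
  omega

theorem modeq_window {n1 x y : ℕ} (h1 : 1 ≤ x) (h2 : x ≤ n1) (h3 : 1 ≤ y) (h4 : y ≤ n1)
    (h : x ≡ y [MOD n1]) : x = y := by
  rcases le_total x y with hle | hle
  · have hd := (Nat.modEq_iff_dvd' hle).mp h
    rcases Nat.eq_zero_or_pos (y - x) with h0 | hpos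
    · omega
    · have := Nat.le_of_dvd hpos hd
      omega
  · have hd := (Nat.modEq_iff_dvd' hle).mp h.symm
    rcases Nat.eq_zero_or_pos (x - y) with h0 | hpos
    · omega
    · have := Nat.le_of_dvd hpos hd
      omega



end Chunk4

namespace Stmt7Aux
open Finset

def phiz (n1 M W : ℕ) (x : ZMod n1) : ZMod M := ((W * x.val : ℕ) : ZMod M)

theorem phiz_natCast {n1 M W : ℕ} [NeZero n1] (hdvd : M ∣ n1 * W) (n : ℕ) :
    phiz n1 M W ((n : ZMod n1)) = ((W * n : ℕ) : ZMod M) := by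
  unfold phiz
  rw [ZMod.val_natCast]
  refine (ZMod.natCast_eq_natCast_iff _ _ _).mpr ?_
  refine Nat.ModEq.of_dvd (show M ∣ W * n1 by rwa [mul_comm] at hdvd) ?_
  exact Nat.ModEq.mul_left' W (Nat.mod_modEq n n1)

theorem phiz_add {n1 M W : ℕ} [NeZero n1] (hdvd : M ∣ n1 * W) (x y : ZMod n1) :
    phiz n1 M W (x + y) = phiz n1 M W x + phiz n1 M W y := by
  have hx : ((x.val : ℕ) : ZMod n1) = x := ZMod.natCast_rightInverse x
  have hy : ((y.val : ℕ) : ZMod n1) = y := ZMod.natCast_rightInverse y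
  have h1 : x + y = (((x.val + y.val : ℕ)) : ZMod n1) := by push_cast [hx, hy]; ring
  rw [h1, phiz_natCast hdvd]
  conv_rhs => rw [← hx, ← hy, phiz_natCast hdvd, phiz_natCast hdvd]
  rw [← Nat.cast_add, Nat.mul_add]

theorem phiz_zero {n1 M W : ℕ} : phiz n1 M W 0 = 0 := by
  unfold phiz
  simp [ZMod.val_zero]

theorem phiz_intCast {n1 M W : ℕ} [NeZero n1] (hdvd : M ∣ n1 * W) (c : ℤ) :
    phiz n1 M W ((c : ZMod n1)) = ((W * c : ℤ) : ZMod M) := by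
  have hn1 : ((n1 : ℤ)) ≠ 0 := by exact_mod_cast NeZero.ne n1
  set nc := (c % (n1 : ℤ)).toNat with hnc
  have h1 : ((nc : ℤ)) = c % n1 := Int.toNat_of_nonneg (Int.emod_nonneg c hn1)
  have h2 : ((c : ZMod n1)) = ((nc : ℕ) : ZMod n1) := by
    have : (((nc : ℤ)) : ZMod n1) = ((c : ℤ) : ZMod n1) := by
      refine (ZMod.intCast_eq_intCast_iff _ _ _).mpr ?_
      rw [h1]
      exact Int.emod_emod_of_dvd c dvd_rfl
    rw [← this]; push_cast; ring
  rw [h2, phiz_natCast hdvd]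
  have hmod : ((W * nc : ℕ) : ℤ) ≡ W * c [ZMOD ((M : ℕ) : ℤ)] := by
    have hd2 : ((M : ℕ) : ℤ) ∣ ((W : ℕ) : ℤ) * ((n1 : ℕ) : ℤ) := by
      exact_mod_cast Int.natCast_dvd_natCast.mpr (show M ∣ W * n1 by rwa [mul_comm] at hdvd)
    refine Int.ModEq.of_dvd hd2 ?_
    push_cast
    rw [h1]
    exact Int.ModEq.mul_left' (Int.emod_emod_of_dvd c dvd_rfl)
  calc ((W * nc : ℕ) : ZMod M) = (((W * nc : ℕ) : ℤ) : ZMod M) := by push_cast; ring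
  _ = ((W * c : ℤ) : ZMod M) := (ZMod.intCast_eq_intCast_iff _ _ _).mpr hmod


variable {ι : Type} [Fintype ι] [DecidableEq ι]

def Psi (n1 : ℕ) (w : ι → ℕ) (S : Finset ι) (r : ι → ZMod n1) : ZMod (n1 * S.gcd w) :=
  ∑ j ∈ S, phiz n1 (n1 * S.gcd w) (w j) (r j)

theorem psi_add {n1 : ℕ} [NeZero n1] (w : ι → ℕ) (S : Finset ι) (r r' : ι → ZMod n1) :
    Psi n1 w S (r + r') = Psi n1 w S r + Psi n1 w S r' := by
  unfold Psi
  rw [← Finset.sum_add_distrib]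
  refine Finset.sum_congr rfl fun j hj => ?_
  exact phiz_add (mul_dvd_mul_left n1 (Finset.gcd_dvd hj)) (r j) (r' j)

theorem psi_nsmul {n1 : ℕ} [NeZero n1] (w : ι → ℕ) (S : Finset ι) (t : ℕ) (r : ι → ZMod n1) :
    Psi n1 w S (t • r) = t • Psi n1 w S r := by
  induction t with
  | zero => simp only [zero_smul]; unfold Psi; simp [phiz_zero]
  | succ k ih =>
      have h1 : (k+1) • r = k • r + r := by rw [add_smul, one_smul]
      rw [h1, psi_add, ih, add_smul, one_smul]

theorem bezout (w : ι → ℕ) (S : Finset ι) :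
    ∃ c : ι → ℤ, ∑ j ∈ S, c j * w j = ((S.gcd w : ℕ) : ℤ) := by
  classical
  induction S using Finset.induction_on with
  | empty => exact ⟨0, by simp⟩
  | @insert a S ha ih =>
      obtain ⟨c, hc⟩ := ih
      have hg : (insert a S).gcd w = Nat.gcd (w a) (S.gcd w) := by
        rw [Finset.gcd_insert]; rfl
      refine ⟨fun j => if j = a then Nat.gcdA (w a) (S.gcd w)
        else Nat.gcdB (w a) (S.gcd w) * c j, ?_⟩
      rw [Finset.sum_insert ha]
      beta_reduce
      rw [if_pos rfl]
      have hre : ∑ j ∈ S, (if j = a then Nat.gcdA (w a) (S.gcd w)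
          else Nat.gcdB (w a) (S.gcd w) * c j) * (w j : ℤ)
          = Nat.gcdB (w a) (S.gcd w) * ∑ j ∈ S, c j * (w j : ℤ) := by
        rw [Finset.mul_sum]
        refine Finset.sum_congr rfl fun j hj => ?_
        rw [if_neg (by rintro rfl; exact ha hj)]
        ring
      rw [hre, hc, hg, Nat.gcd_eq_gcd_ab]
      ring

theorem fiber_bound {n1 : ℕ} [NeZero n1] (w : ι → ℕ) (hw : ∀ i, 1 ≤ w i)
    (S : Finset ι) (hS : S.Nonempty) (c : ZMod (n1 * S.gcd w)) :
    (Finset.univ.filter fun r : ι → ZMod n1 =>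
      (∀ j ∉ S, r j = 0) ∧ Psi n1 w S r = c).card ≤ n1 ^ (S.card - 1) := by
  classical
  have hn1 : 1 ≤ n1 := Nat.one_le_iff_ne_zero.mpr (NeZero.ne n1)
  have hgpos : 1 ≤ S.gcd w := by
    rcases Nat.eq_zero_or_pos (S.gcd w) with h | h
    · exfalso
      obtain ⟨j, hj⟩ := hS
      have h2 := Finset.gcd_eq_zero_iff.mp h j hj
      have := hw j; omega
    · exact h
  haveI : NeZero (n1 * S.gcd w) := ⟨by positivity⟩
  set D : Finset (ι → ZMod n1) :=
    Fintype.piFinset (fun j => if j ∈ S then (Finset.univ : Finset (ZMod n1)) else {0}) with hD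
  have memD : ∀ r : ι → ZMod n1, r ∈ D ↔ ∀ j ∉ S, r j = 0 := by
    intro r
    rw [hD, Fintype.mem_piFinset]
    constructor
    · intro h j hj
      have := h j
      rw [if_neg hj] at this
      simpa using this
    · intro h j
      by_cases hj : j ∈ S
      · rw [if_pos hj]; exact Finset.mem_univ _
      · rw [if_neg hj]; simpa using h j hj
  have cardD : D.card = n1 ^ S.card := by
    rw [hD, Fintype.card_piFinset]
    rw [← Finset.prod_mul_prod_compl S]
    have h1 : ∏ j ∈ S, (if j ∈ S then (Finset.univ : Finset (ZMod n1)) else {0}).card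
        = n1 ^ S.card := by
      rw [Finset.prod_congr rfl (fun j hj => by rw [if_pos hj])]
      simp [Finset.card_univ, ZMod.card]
    have h2 : ∏ j ∈ Sᶜ, (if j ∈ S then (Finset.univ : Finset (ZMod n1)) else {0}).card = 1 := by
      refine Finset.prod_eq_one fun j hj => ?_
      rw [if_neg (Finset.mem_compl.mp hj)]
      simp
    rw [h1, h2, mul_one]
  have hset : (Finset.univ.filter fun r : ι → ZMod n1 =>
      (∀ j ∉ S, r j = 0) ∧ Psi n1 w S r = c) = D.filter (fun r => Psi n1 w S r = c) := by
    ext r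
    simp only [Finset.mem_filter, Finset.mem_univ, true_and, memD]
  rw [hset]
  rcases Finset.eq_empty_or_nonempty (D.filter (fun r => Psi n1 w S r = c)) with hemp | hne
  · rw [hemp]; simp
  obtain ⟨r₀, hr₀⟩ := hne
  rw [Finset.mem_filter] at hr₀
  obtain ⟨hr₀D, hr₀c⟩ := hr₀
  have hfib : ∀ v ∈ D.image (Psi n1 w S),
      (D.filter (fun r => Psi n1 w S r = v)).card
        = (D.filter (fun r => Psi n1 w S r = c)).card := by
    intro v hv
    obtain ⟨rv, hrvD, hrv⟩ := Finset.mem_image.mp hv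
    set δ := rv - r₀ with hδ
    have hδD : δ ∈ D := by
      rw [memD]
      intro j hj
      have e1 := (memD rv).mp hrvD j hj
      have e2 := (memD r₀).mp hr₀D j hj
      simp [hδ, Pi.sub_apply, e1, e2]
    have hψδ : Psi n1 w S δ = v - c := by
      have h := psi_add w S δ r₀
      rw [show δ + r₀ = rv by rw [hδ]; abel, hrv, hr₀c] at h
      exact eq_sub_of_add_eq h.symm
    symm
    refine Finset.card_bij' (fun r _ => r + δ) (fun s _ => s - δ) ?_ ?_ ?_ ?_
    · intro r hr
      rw [Finset.mem_filter] at hr ⊢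
      obtain ⟨hrD, hrc⟩ := hr
      constructor
      · rw [memD]
        intro j hj
        simp [Pi.add_apply, (memD r).mp hrD j hj, (memD δ).mp hδD j hj]
      · rw [psi_add, hrc, hψδ]
        abel
    · intro s hs
      rw [Finset.mem_filter] at hs ⊢
      obtain ⟨hsD, hsv⟩ := hs
      constructor
      · rw [memD]
        intro j hj
        simp [Pi.sub_apply, (memD s).mp hsD j hj, (memD δ).mp hδD j hj]
      · have h := psi_add w S (s - δ) δ
        rw [show s - δ + δ = s by abel, hsv, hψδ] at h
        have h2 := eq_sub_of_add_eq h.symm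
        rw [h2]
        abel
    · intro r _
      exact add_sub_cancel_right r δ
    · intro s _
      exact sub_add_cancel s δ
  have hcount : D.card = (D.image (Psi n1 w S)).card
      * (D.filter (fun r => Psi n1 w S r = c)).card := by
    rw [Finset.card_eq_sum_card_fiberwise
      (fun r hr => Finset.mem_image_of_mem (Psi n1 w S) hr)]
    rw [Finset.sum_congr rfl hfib, Finset.sum_const, smul_eq_mul]
  -- the image has at least n1 elements
  obtain ⟨cf, hcf⟩ := bezout w S
  set rstar : ι → ZMod n1 := fun j => if j ∈ S then ((cf j : ℤ) : ZMod n1) else 0 with hrstar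
  have hrstarD : rstar ∈ D := by
    rw [memD]; intro j hj; simp [hrstar, if_neg hj]
  have psirstar : Psi n1 w S rstar = ((S.gcd w : ℕ) : ZMod (n1 * S.gcd w)) := by
    unfold Psi
    have h1 : ∀ j ∈ S, phiz n1 (n1 * S.gcd w) (w j) (rstar j)
        = (((w j * cf j : ℤ)) : ZMod (n1 * S.gcd w)) := by
      intro j hj
      rw [hrstar]
      simp only [if_pos hj]
      rw [phiz_intCast (mul_dvd_mul_left n1 (Finset.gcd_dvd hj))]
    rw [Finset.sum_congr rfl h1, ← Int.cast_sum]
    have h2 : ∑ j ∈ S, (w j : ℤ) * cf j = ((S.gcd w : ℕ) : ℤ) := by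
      rw [← hcf]
      exact Finset.sum_congr rfl fun j _ => by ring
    rw [h2]
    push_cast
    ring
  have himg : n1 ≤ (D.image (Psi n1 w S)).card := by
    have hmapsto : ∀ t ∈ Finset.range n1,
        Psi n1 w S (r₀ + t • rstar) ∈ D.image (Psi n1 w S) := by
      intro t _
      refine Finset.mem_image_of_mem _ ?_
      rw [memD]
      intro j hj
      have e1 := (memD r₀).mp hr₀D j hj
      have e2 := (memD rstar).mp hrstarD j hj
      simp [Pi.add_apply, Pi.smul_apply, e1, e2]
    have hval : ∀ t : ℕ, Psi n1 w S (r₀ + t • rstar)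
        = c + ((t * S.gcd w : ℕ) : ZMod (n1 * S.gcd w)) := by
      intro t
      rw [psi_add, psi_nsmul, psirstar, hr₀c]
      congr 1
      rw [nsmul_eq_mul]
      push_cast
      ring
    have hinj : Set.InjOn (fun t => Psi n1 w S (r₀ + t • rstar)) ((Finset.range n1 : Finset ℕ) : Set ℕ) := by
      intro t ht t' ht' hEq
      simp only [Finset.coe_range, Set.mem_Iio] at ht ht'
      simp only [hval] at hEq
      have h2 : ((t * S.gcd w : ℕ) : ZMod (n1 * S.gcd w))
          = ((t' * S.gcd w : ℕ) : ZMod (n1 * S.gcd w)) := by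
        exact add_left_cancel hEq
      have h3 : (t * S.gcd w) % (n1 * S.gcd w) = (t' * S.gcd w) % (n1 * S.gcd w) := by
        have := congrArg ZMod.val h2
        rwa [ZMod.val_natCast, ZMod.val_natCast] at this
      have h4 : t * S.gcd w < n1 * S.gcd w := by
        exact Nat.mul_lt_mul_of_lt_of_le ht le_rfl (by omega)
      have h5 : t' * S.gcd w < n1 * S.gcd w := by
        exact Nat.mul_lt_mul_of_lt_of_le ht' le_rfl (by omega)
      rw [Nat.mod_eq_of_lt h4, Nat.mod_eq_of_lt h5] at h3
      exact Nat.eq_of_mul_eq_mul_right (by omega) h3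
    calc n1 = (Finset.range n1).card := (Finset.card_range n1).symm
    _ ≤ (D.image (Psi n1 w S)).card := Finset.card_le_card_of_injOn _ hmapsto hinj
  -- conclude
  have hSc : 1 ≤ S.card := Finset.card_pos.mpr hS
  have hpow : n1 ^ S.card = n1 ^ (S.card - 1) * n1 := by
    rw [← pow_succ]
    congr 1
    omega
  have hfinal : n1 * (D.filter (fun r => Psi n1 w S r = c)).card
      ≤ (D.image (Psi n1 w S)).card * (D.filter (fun r => Psi n1 w S r = c)).card :=
    Nat.mul_le_mul_right _ himg
  rw [← hcount, cardD, hpow] at hfinal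
  have hfinal2 : n1 * (D.filter (fun r => Psi n1 w S r = c)).card
      ≤ n1 * n1 ^ (S.card - 1) := by
    calc n1 * (D.filter (fun r => Psi n1 w S r = c)).card ≤ n1 ^ (S.card - 1) * n1 := hfinal
    _ = n1 * n1 ^ (S.card - 1) := by ring
  exact Nat.le_of_mul_le_mul_left hfinal2 (by omega)

theorem geom (p k : ℕ) : p * (∑ i ∈ Finset.range k, (p+1) ^ i) + 1 = (p+1) ^ k := by
  induction k with
  | zero => simp
  | succ k ih =>
      rw [Finset.sum_range_succ, Nat.mul_add]
      calc p * (∑ i ∈ Finset.range k, (p+1) ^ i) + p * (p+1)^k + 1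
          = (p * (∑ i ∈ Finset.range k, (p+1) ^ i) + 1) + p * (p+1)^k := by ring
      _ = (p+1)^k + p * (p+1)^k := by rw [ih]
      _ = (p+1)^(k+1) := by ring

theorem sum_pow_subsets (p : ℕ) : ∑ S : Finset ι, p ^ S.card = (p+1) ^ (Fintype.card ι) := by
  have h := Finset.prod_add (fun _ : ι => p) (fun _ : ι => 1) Finset.univ
  rw [Finset.prod_const, Finset.card_univ] at h
  rw [h, Finset.powerset_univ]
  exact Finset.sum_congr rfl fun S _ => by
    rw [Finset.prod_const, Finset.prod_const, one_pow, mul_one]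

theorem sum_classes (p : ℕ) (hple : 1 ≤ p) :
    ∑ S : Finset ι, (if S.Nonempty then p ^ (S.card - 1) else 0)
      = ∑ i ∈ Finset.range (Fintype.card ι), (p+1) ^ i := by
  -- split off the empty set
  have hmem : (∅ : Finset ι) ∈ (Finset.univ : Finset (Finset ι)) := Finset.mem_univ _
  have h1 : ∑ S : Finset ι, p ^ S.card
      = p ^ (∅ : Finset ι).card + ∑ S ∈ (Finset.univ : Finset (Finset ι)).erase ∅, p ^ S.card :=
    (Finset.add_sum_erase _ _ hmem).symm
  have h2 : ∑ S : Finset ι, (if S.Nonempty then p ^ (S.card - 1) else 0)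
      = ∑ S ∈ (Finset.univ : Finset (Finset ι)).erase ∅, p ^ (S.card - 1) := by
    rw [← Finset.add_sum_erase _ _ hmem]
    rw [if_neg (by simp)]
    rw [zero_add]
    refine Finset.sum_congr rfl fun S hS => ?_
    rw [if_pos (Finset.nonempty_iff_ne_empty.mpr (Finset.ne_of_mem_erase hS))]
  -- multiply by p
  have h3 : p * (∑ S ∈ (Finset.univ : Finset (Finset ι)).erase ∅, p ^ (S.card - 1))
      = ∑ S ∈ (Finset.univ : Finset (Finset ι)).erase ∅, p ^ S.card := by
    rw [Finset.mul_sum]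
    refine Finset.sum_congr rfl fun S hS => ?_
    have hSc : 1 ≤ S.card := Finset.card_pos.mpr
      (Finset.nonempty_iff_ne_empty.mpr (Finset.ne_of_mem_erase hS))
    rw [← pow_succ']
    congr 1
    omega
  have h4 := sum_pow_subsets (ι := ι) p
  rw [h1, Finset.card_empty, pow_zero] at h4
  have h5 := geom p (Fintype.card ι)
  -- p * LHS = p * RHS
  have h6 : p * (∑ S : Finset ι, (if S.Nonempty then p ^ (S.card - 1) else 0))
      = p * (∑ i ∈ Finset.range (Fintype.card ι), (p+1) ^ i) := by
    rw [h2, h3]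
    omega
  exact Nat.eq_of_mul_eq_mul_left (by omega) h6

end Stmt7Aux

section Chunk6

variable {F : Type} [Field F] [Fintype F] {m : ℕ} {w : Fin (m + 1) → ℕ}

open Stmt7Aux

def clsOf (w : Fin (m+1) → ℕ) (n1 : ℕ) (b : Fin (m + 1) →₀ ℕ) :
    Finset (Fin (m + 1)) × (Fin (m + 1) → ZMod n1) :=
  (b.support, fun j => ((b j : ℕ) : ZMod n1))

def Kcl (w : Fin (m+1) → ℕ) (n1 dtil : ℕ) :
    Set (Finset (Fin (m + 1)) × (Fin (m + 1) → ZMod n1)) :=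
  {p | p.1.Nonempty ∧ (∀ j ∉ p.1, p.2 j = 0) ∧
    Psi n1 w p.1 p.2 = ((dtil : ℕ) : ZMod (n1 * p.1.gcd w))}

theorem cls_mem (hq : 2 ≤ Fintype.card F) {dtil : ℕ} (hd : 1 ≤ dtil)
    {b : Fin (m+1) →₀ ℕ} (hb : b ∈ MbarD F w dtil) :
    clsOf w (Fintype.card F - 1) b ∈ Kcl w (Fintype.card F - 1) dtil := by
  haveI : NeZero (Fintype.card F - 1) := ⟨by omega⟩
  obtain ⟨hbM, hbdeg⟩ := hb
  refine ⟨?_, ?_, ?_⟩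
  · rw [show (clsOf w (Fintype.card F - 1) b).1 = b.support from rfl,
      Finsupp.support_nonempty_iff]
    intro h
    rw [h, wdeg_zero] at hbdeg
    omega
  · intro j hj
    show ((b j : ℕ) : ZMod (Fintype.card F - 1)) = 0
    rw [Finsupp.notMem_support_iff.mp hj]
    exact Nat.cast_zero
  · show Psi (Fintype.card F - 1) w b.support (fun j => ((b j : ℕ) : ZMod _)) = _
    unfold Psi
    have h1 : ∀ j ∈ b.support,
        phiz (Fintype.card F - 1) ((Fintype.card F - 1) * b.support.gcd w) (w j)
          (((b j : ℕ) : ZMod (Fintype.card F - 1)))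
        = ((w j * b j : ℕ) : ZMod ((Fintype.card F - 1) * b.support.gcd w)) :=
      fun j hj => phiz_natCast (mul_dvd_mul_left _ (Finset.gcd_dvd hj)) _
    rw [Finset.sum_congr rfl h1, ← Nat.cast_sum]
    have h2 : ∑ j ∈ b.support, w j * b j = wdeg w b := by
      unfold wdeg
      refine Finset.sum_subset (Finset.subset_univ _) ?_
      intro t _ ht
      rw [Finsupp.notMem_support_iff.mp ht, Nat.mul_zero]
    rw [h2, hbdeg]
    rfl

theorem cls_inj (hq : 2 ≤ Fintype.card F) {dtil : ℕ} :
    Set.InjOn (clsOf w (Fintype.card F - 1)) (MbarD F w dtil) := by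
  intro b hb b' hb' heq
  have hsup : b.support = b'.support := congrArg Prod.fst heq
  have hres : ∀ t, ((b t : ℕ) : ZMod (Fintype.card F - 1))
      = ((b' t : ℕ) : ZMod (Fintype.card F - 1)) :=
    fun t => congrFun (congrArg Prod.snd heq) t
  refine mbar_eq_of_class_eq hq hb.1 hb'.1 (hb.2.trans hb'.2.symm) ?_ ?_
  · intro t
    rw [← Finsupp.notMem_support_iff, ← Finsupp.notMem_support_iff, hsup]
  · intro t
    exact (ZMod.natCast_eq_natCast_iff _ _ _).mp (hres t)

theorem Kcl_ncard_le (hq : 2 ≤ Fintype.card F) (hpos : ∀ i, 1 ≤ w i) (dtil : ℕ) :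
    (Kcl w (Fintype.card F - 1) dtil).ncard ≤ pSum (Fintype.card F) (m+1) := by
  classical
  haveI : NeZero (Fintype.card F - 1) := ⟨by omega⟩
  have hfin : (Kcl w (Fintype.card F - 1) dtil).Finite := Set.toFinite _
  rw [Set.ncard_eq_toFinset_card _ hfin]
  rw [Finset.card_eq_sum_card_fiberwise
    (fun p (_ : p ∈ hfin.toFinset) => Finset.mem_univ p.1)]
  have hbound : ∀ S : Finset (Fin (m+1)),
      (hfin.toFinset.filter fun p => p.1 = S).card
        ≤ (if S.Nonempty then (Fintype.card F - 1) ^ (S.card - 1) else 0) := by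
    intro S
    by_cases hS : S.Nonempty
    · rw [if_pos hS]
      refine le_trans (Finset.card_le_card_of_injOn (fun p => p.2) ?_ ?_)
        (fiber_bound w hpos S hS ((dtil : ℕ) : ZMod ((Fintype.card F - 1) * S.gcd w)))
      · rintro ⟨S', r⟩ hp
        rw [Finset.mem_coe, Finset.mem_filter] at hp
        obtain ⟨hpK, hp1⟩ := hp
        simp only at hp1
        subst hp1
        rw [Set.Finite.mem_toFinset] at hpK
        obtain ⟨_, hoff, hpsi⟩ := hpK
        simp only [Finset.mem_coe, Finset.mem_filter, Finset.mem_univ, true_and]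
        exact ⟨hoff, hpsi⟩
      · rintro ⟨S1, r1⟩ h1 ⟨S2, r2⟩ h2 hr
        rw [Finset.mem_coe, Finset.mem_filter] at h1 h2
        simp only at h1 h2 hr
        rw [Prod.mk.injEq]
        exact ⟨h1.2.trans h2.2.symm, hr⟩
    · rw [if_neg hS]
      refine Nat.le_of_eq ?_
      rw [Finset.card_eq_zero, Finset.filter_eq_empty_iff]
      rintro ⟨S', r⟩ hp
      rw [Set.Finite.mem_toFinset] at hp
      simp only
      intro h1
      rw [h1] at hp
      exact hS hp.1
  refine le_trans (Finset.sum_le_sum fun S _ => hbound S) ?_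
  have hsc := Stmt7Aux.sum_classes (ι := Fin (m+1)) (Fintype.card F - 1) (by omega)
  rw [Fintype.card_fin] at hsc
  rw [hsc]
  unfold pSum
  refine le_of_eq (Finset.sum_congr rfl fun i _ => ?_)
  congr 1
  omega

theorem cls_surj (hq : 2 ≤ Fintype.card F) (hpos : ∀ i, 1 ≤ w i) {dtil : ℕ}
    (hreg : dtil ∈ regSet F w) :
    ∀ p ∈ Kcl w (Fintype.card F - 1) dtil,
      ∃ b ∈ MbarD F w dtil, clsOf w (Fintype.card F - 1) b = p := by
  obtain ⟨hd1, hcard⟩ := hreg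
  haveI : NeZero (Fintype.card F - 1) := ⟨by omega⟩
  have himg : clsOf w (Fintype.card F - 1) '' (MbarD F w dtil)
      ⊆ Kcl w (Fintype.card F - 1) dtil := by
    rintro p ⟨b, hb, rfl⟩
    exact cls_mem hq hd1 hb
  have heq : clsOf w (Fintype.card F - 1) '' (MbarD F w dtil)
      = Kcl w (Fintype.card F - 1) dtil := by
    refine Set.eq_of_subset_of_ncard_le himg ?_ (Set.toFinite _)
    rw [Set.ncard_image_of_injOn (cls_inj hq), hcard]
    exact Kcl_ncard_le hq hpos dtil
  intro p hp
  rw [← heq] at hp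
  exact hp

end Chunk6


set_option maxHeartbeats 2000000 in
open Stmt7Aux in
/-- Lemma 2.10 of the paper: elementary properties of `FB_i`,
for `d̃ ∈ reg` sufficiently large relative to `d`. -/
theorem stmt7 (F : Type) [Field F] [Fintype F] (m ℓ : ℕ) (w : Fin (m + 1) → ℕ)
    (hℓ1 : 1 ≤ ℓ) (hℓm : ℓ + 1 ≤ m)
    (hpos : ∀ i, 1 ≤ w i)
    (hw0 : w ⟨0, by omega⟩ = 1)
    (hweq : ∀ i : Fin (m + 1), 1 ≤ (i : ℕ) → (i : ℕ) ≤ ℓ → w i = w ⟨1, by omega⟩)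
    (hlt : w ⟨ℓ, by omega⟩ < w ⟨ℓ + 1, by omega⟩)
    (hmono : ∀ i j : Fin (m + 1), ℓ + 1 ≤ (i : ℕ) → i ≤ j → w i ≤ w j)
    (d : ℕ) (j0 : Fin (m + 1)) (a : Fin (m + 1) →₀ ℕ)
    (ha : a ∈ MbarDI F w d j0) :
    ∃ N : ℕ, ∀ dtil ∈ regSet F w, N ≤ dtil →
      (∀ i : Fin (m + 1), (j0 : ℕ) + 1 ≤ (i : ℕ) → FBi F w dtil i a = 0) ∧
      (FB F w dtil a =
        ∑ i ∈ Finset.univ.filter (fun i : Fin (m + 1) => i ≤ j0), FBi F w dtil i a) ∧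
      (d ≤ w ⟨1, by omega⟩ * Fintype.card F →
        ∀ i : Fin (m + 1), i ≤ j0 → (∀ t : Fin (m + 1), t ≤ i → w t = 1) →
          FBi F w dtil i a =
            ∏ j ∈ Finset.univ.filter (fun j : Fin (m + 1) => i < j),
              (Fintype.card F - a j)) := by
  classical
  have hq2 : 2 ≤ Fintype.card F := Fintype.one_lt_card
  obtain ⟨⟨haM, hadeg⟩, hazero, haj0⟩ := ha
  refine ⟨d + (∑ t, w t * Fintype.card F) + 1, fun dtil hreg hN => ?_⟩
  have hd1 : 1 ≤ dtil := hreg.1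
  refine ⟨?_, ?_, ?_⟩
  · -- part (i)
    intro i hi
    unfold FBi
    convert Set.ncard_empty (Fin (m+1) →₀ ℕ) using 2
    ext b
    simp only [Set.mem_setOf_eq, Set.mem_empty_iff_false, iff_false]
    rintro ⟨⟨hbMD, hbz, hbi⟩, hab⟩
    have hj0i : j0 < i := by
      rw [Fin.lt_def]; omega
    have h1 : b j0 = 0 := hbz j0 hj0i
    have h2 : a j0 ≤ b j0 := Finsupp.le_def.mp hab j0
    omega
  · -- part (ii)
    have hfinall : {b | b ∈ MbarD F w dtil ∧ a ≤ b}.Finite :=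
      (finite_wdeg hpos dtil).subset (fun b hb => hb.1.2)
    unfold FB
    rw [Set.ncard_eq_toFinset_card _ hfinall]
    set idx : (Fin (m+1) →₀ ℕ) → Fin (m+1) :=
      fun b => if h : b.support.Nonempty then b.support.min' h else 0 with hidx
    have hidxval : ∀ (b : Fin (m+1) →₀ ℕ) (h : b.support.Nonempty),
        idx b = b.support.min' h := fun b h => dif_pos h
    have hmaps : ∀ b ∈ hfinall.toFinset,
        idx b ∈ Finset.univ.filter (fun i : Fin (m+1) => i ≤ j0) := by
      intro b hb
      rw [Set.Finite.mem_toFinset] at hb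
      obtain ⟨hbMD, hab⟩ := hb
      have hbj0 : 1 ≤ b j0 := by
        have := Finsupp.le_def.mp hab j0
        omega
      have hj0mem : j0 ∈ b.support := Finsupp.mem_support_iff.mpr (by omega)
      have hsupp : b.support.Nonempty := ⟨j0, hj0mem⟩
      rw [Finset.mem_filter]
      refine ⟨Finset.mem_univ _, ?_⟩
      rw [hidxval b hsupp]
      exact Finset.min'_le _ j0 hj0mem
    rw [Finset.card_eq_sum_card_fiberwise hmaps]
    refine Finset.sum_congr rfl fun i hi => ?_
    have hfini : {b | b ∈ MbarDI F w dtil i ∧ a ≤ b}.Finite :=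
      (finite_wdeg hpos dtil).subset (fun b hb => hb.1.1.2)
    unfold FBi
    rw [Set.ncard_eq_toFinset_card _ hfini]
    congr 1
    ext b
    rw [Finset.mem_filter, Set.Finite.mem_toFinset, Set.Finite.mem_toFinset]
    constructor
    · rintro ⟨⟨hbMD, hab⟩, hidxb⟩
      have hbj0 : 1 ≤ b j0 := by
        have := Finsupp.le_def.mp hab j0
        omega
      have hsupp : b.support.Nonempty := ⟨j0, Finsupp.mem_support_iff.mpr (by omega)⟩
      rw [hidxval b hsupp] at hidxb
      refine ⟨⟨hbMD, ?_, ?_⟩, hab⟩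
      · intro t ht
        rw [← Finsupp.notMem_support_iff]
        intro hmem
        have hle := Finset.min'_le _ t hmem
        rw [hidxb] at hle
        exact absurd ht (not_lt.mpr hle)
      · have hmem := Finset.min'_mem b.support hsupp
        rw [Finsupp.mem_support_iff] at hmem
        rw [← hidxb]
        omega
    · rintro ⟨⟨hbMD, hbz, hbi⟩, hab⟩
      refine ⟨⟨hbMD, hab⟩, ?_⟩
      have hsupp : b.support.Nonempty := ⟨i, Finsupp.mem_support_iff.mpr (by omega)⟩
      rw [hidxval b hsupp]
      refine le_antisymm (Finset.min'_le _ i (Finsupp.mem_support_iff.mpr (by omega))) ?_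
      by_contra hlt
      push_neg at hlt
      have hmem := Finset.min'_mem b.support hsupp
      rw [Finsupp.mem_support_iff] at hmem
      exact hmem (hbz _ hlt)
  · -- part (iii)
    intro hdq i hij0 hones
    have hwi : w i = 1 := hones i le_rfl
    haveI : NeZero (Fintype.card F - 1) := ⟨by omega⟩
    set B : Finset (Fin (m+1) → ℕ) :=
      Fintype.piFinset (fun j => if i < j then Finset.Icc (a j) (Fintype.card F - 1)
        else ({0} : Finset ℕ)) with hB
    have hfini : {b | b ∈ MbarDI F w dtil i ∧ a ≤ b}.Finite :=
      (finite_wdeg hpos dtil).subset (fun b hb => hb.1.1.2)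
    unfold FBi
    rw [Set.ncard_eq_toFinset_card _ hfini]
    have hcardB : B.card = ∏ j ∈ Finset.univ.filter (fun j : Fin (m+1) => i < j),
        (Fintype.card F - a j) := by
      rw [hB, Fintype.card_piFinset, Finset.prod_filter]
      refine Finset.prod_congr rfl fun j _ => ?_
      by_cases hj : i < j
      · rw [if_pos hj, if_pos hj, Nat.card_Icc]
        omega
      · rw [if_neg hj, if_neg hj]
        exact Finset.card_singleton _
    rw [← hcardB]
    have haid : a i ≤ d := by
      have h1 : w i * a i ≤ wdeg w a := by
        unfold wdeg
        exact Finset.single_le_sum (f := fun t => w t * a t)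
          (fun _ _ => Nat.zero_le _) (Finset.mem_univ i)
      rw [hadeg, hwi, one_mul] at h1
      exact h1
    refine Finset.card_bij (fun b _ => fun j => if i < j then b j else 0) ?_ ?_ ?_
    · -- maps into B
      intro b hb
      rw [Set.Finite.mem_toFinset] at hb
      obtain ⟨⟨hbMD, hbz, hbi⟩, hab⟩ := hb
      rw [hB, Fintype.mem_piFinset]
      intro j
      show (if i < j then b j else 0) ∈
        (if i < j then Finset.Icc (a j) (Fintype.card F - 1) else ({0} : Finset ℕ))
      by_cases hj : i < j
      · rw [if_pos hj, if_pos hj, Finset.mem_Icc]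
        refine ⟨Finsupp.le_def.mp hab j, ?_⟩
        exact mbar_bounded hq2 hbMD.1 hj hwi hbi
      · rw [if_neg hj, if_neg hj]
        exact Finset.mem_singleton_self 0
    · -- injective
      intro b1 h1 b2 h2 heq
      rw [Set.Finite.mem_toFinset] at h1 h2
      obtain ⟨⟨hb1MD, hb1z, hb1i⟩, hab1⟩ := h1
      obtain ⟨⟨hb2MD, hb2z, hb2i⟩, hab2⟩ := h2
      have hcoord : ∀ j, i < j → b1 j = b2 j := by
        intro j hj
        have h5 : (if i < j then b1 j else 0) = (if i < j then b2 j else 0) := congrFun heq j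
        rwa [if_pos hj, if_pos hj] at h5
      have hsplit1 := wdeg_split (w := w) b1 i hb1z
      have hsplit2 := wdeg_split (w := w) b2 i hb2z
      rw [hb1MD.2] at hsplit1
      rw [hb2MD.2] at hsplit2
      have hsums : ∑ j ∈ Finset.univ.filter (fun j : Fin (m+1) => i < j), w j * b1 j
          = ∑ j ∈ Finset.univ.filter (fun j : Fin (m+1) => i < j), w j * b2 j := by
        refine Finset.sum_congr rfl fun j hj => ?_
        rw [hcoord j (Finset.mem_filter.mp hj).2]
      have hii : b1 i = b2 i := by
        rw [hwi, one_mul] at hsplit1 hsplit2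
        omega
      ext t
      rcases lt_trichotomy t i with ht | ht | ht
      · rw [hb1z t ht, hb2z t ht]
      · rw [ht, hii]
      · exact hcoord t ht
    · -- surjective
      intro cc hcc
      rw [hB, Fintype.mem_piFinset] at hcc
      have hccz : ∀ j, ¬ i < j → cc j = 0 := by
        intro j hj
        have := hcc j
        rw [if_neg hj] at this
        simpa using this
      have hccb : ∀ j, i < j → a j ≤ cc j ∧ cc j ≤ Fintype.card F - 1 := by
        intro j hj
        have := hcc j
        rw [if_pos hj] at this
        exact Finset.mem_Icc.mp this
      set T : Finset (Fin (m+1)) := Finset.univ.filter (fun j => i < j ∧ cc j ≠ 0) with hT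
      have hiT : i ∉ T := by simp [hT]
      set S : Finset (Fin (m+1)) := insert i T with hS
      have hiS : i ∈ S := Finset.mem_insert_self i T
      set Sf : ℕ := ∑ j ∈ Finset.univ.filter (fun j : Fin (m+1) => i < j), w j * cc j with hSf
      set ρ : ZMod (Fintype.card F - 1) :=
        (Int.cast ((dtil : ℤ) - (Sf : ℤ)) : ZMod (Fintype.card F - 1)) with hρ
      set rr : Fin (m+1) → ZMod (Fintype.card F - 1) :=
        fun j => if j = i then ρ else ((cc j : ℕ) : ZMod (Fintype.card F - 1)) with hrr
      have hpcl : (S, rr) ∈ Kcl w (Fintype.card F - 1) dtil := by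
        refine ⟨⟨i, hiS⟩, ?_, ?_⟩
        · intro j hj
          have hji : j ≠ i := fun h => hj (h ▸ hiS)
          show rr j = 0
          rw [hrr]
          simp only [if_neg hji]
          have hc0 : cc j = 0 := by
            by_cases hij' : i < j
            · by_contra hcc0
              exact hj (Finset.mem_insert_of_mem (by simp [hT, hij', hcc0]))
            · exact hccz j hij'
          rw [hc0]
          exact Nat.cast_zero
        · show Psi (Fintype.card F - 1) w S rr = _
          unfold Psi
          rw [hS, Finset.sum_insert hiT]
          have hri : rr i = ρ := by rw [hrr]; simp
          have h1 : phiz (Fintype.card F - 1) ((Fintype.card F - 1) * (insert i T).gcd w) (w i) (rr i)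
              = (Int.cast ((w i : ℤ) * ((dtil : ℤ) - (Sf : ℤ)))
                : ZMod ((Fintype.card F - 1) * (insert i T).gcd w)) := by
            rw [hri, hρ]
            exact phiz_intCast
              (mul_dvd_mul_left _ (Finset.gcd_dvd (Finset.mem_insert_self i T))) _
          have h2 : ∀ j ∈ T,
              phiz (Fintype.card F - 1) ((Fintype.card F - 1) * (insert i T).gcd w) (w j) (rr j)
              = ((w j * cc j : ℕ) : ZMod ((Fintype.card F - 1) * (insert i T).gcd w)) := by
            intro j hj
            have hji : j ≠ i := by
              intro h
              rw [h] at hj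
              exact hiT hj
            rw [hrr]
            simp only [if_neg hji]
            exact phiz_natCast
              (mul_dvd_mul_left _ (Finset.gcd_dvd (Finset.mem_insert_of_mem hj))) _
          have h3 : ∑ j ∈ T, w j * cc j = Sf := by
            rw [hSf, hT]
            refine Finset.sum_subset ?_ ?_
            · intro j hj
              rw [Finset.mem_filter] at hj ⊢
              exact ⟨hj.1, hj.2.1⟩
            · intro j hj1 hj2
              rw [Finset.mem_filter] at hj1 hj2
              have : cc j = 0 := by
                by_contra hcc0
                exact hj2 ⟨hj1.1, hj1.2, hcc0⟩
              rw [this, Nat.mul_zero]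
          have h4 : ∑ j ∈ T,
              ((w j * cc j : ℕ) : ZMod ((Fintype.card F - 1) * (insert i T).gcd w))
              = ((Sf : ℕ) : ZMod ((Fintype.card F - 1) * (insert i T).gcd w)) := by
            rw [← Nat.cast_sum, h3]
          rw [h1, Finset.sum_congr rfl h2, h4, hwi]
          push_cast
          rw [one_mul, sub_add_cancel]
      obtain ⟨b, hbMD, hbcls⟩ := cls_surj hq2 hpos hreg (S, rr) hpcl
      have hbsupp : b.support = S := congrArg Prod.fst hbcls
      have hbres : ∀ t, ((b t : ℕ) : ZMod (Fintype.card F - 1)) = rr t :=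
        fun t => congrFun (congrArg Prod.snd hbcls) t
      have hbz : ∀ t, t < i → b t = 0 := by
        intro t ht
        rw [← Finsupp.notMem_support_iff, hbsupp, hS]
        intro hmem
        rcases Finset.mem_insert.mp hmem with rfl | hmem'
        · exact absurd ht (lt_irrefl _)
        · rw [hT, Finset.mem_filter] at hmem'
          exact absurd (ht.trans hmem'.2.1) (lt_irrefl _)
      have hbi1 : 1 ≤ b i := by
        have hmem : i ∈ b.support := by rw [hbsupp]; exact hiS
        rw [Finsupp.mem_support_iff] at hmem
        omega
      have hbMbar : b ∈ Mbar F w := hbMD.1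
      have hbdeg : wdeg w b = dtil := hbMD.2
      have hbub : ∀ j, i < j → b j ≤ Fintype.card F - 1 :=
        fun j hj => mbar_bounded hq2 hbMbar hj hwi hbi1
      have hbj : ∀ j, i < j → b j = cc j := by
        intro j hj
        have hji : j ≠ i := ne_of_gt hj
        have hres := hbres j
        rw [hrr] at hres
        simp only [if_neg hji] at hres
        by_cases hc0 : cc j = 0
        · have hnmem : j ∉ b.support := by
            rw [hbsupp, hS]
            intro hmem
            rcases Finset.mem_insert.mp hmem with rfl | hmem'
            · exact hji rfl
            · rw [hT, Finset.mem_filter] at hmem'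
              exact hmem'.2.2 hc0
          rw [Finsupp.notMem_support_iff.mp hnmem, hc0]
        · have hjS : j ∈ b.support := by
            rw [hbsupp, hS]
            exact Finset.mem_insert_of_mem (by simp [hT, hj, hc0])
          have hbj1 : 1 ≤ b j := by
            rw [Finsupp.mem_support_iff] at hjS
            omega
          have hmodj : b j ≡ cc j [MOD Fintype.card F - 1] :=
            (ZMod.natCast_eq_natCast_iff _ _ _).mp hres
          exact modeq_window hbj1 (hbub j hj) (by omega) (hccb j hj).2 hmodj
      have hbilarge : d + 1 ≤ b i := by
        have hsplit := wdeg_split (w := w) b i hbz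
        rw [hbdeg] at hsplit
        have hbound : ∑ j ∈ Finset.univ.filter (fun j : Fin (m+1) => i < j), w j * b j
            ≤ ∑ t, w t * Fintype.card F := by
          refine le_trans (Finset.sum_le_sum ?_)
            (Finset.sum_le_sum_of_subset (Finset.filter_subset _ _))
          intro j hj
          have h4 := hbub j (Finset.mem_filter.mp hj).2
          exact Nat.mul_le_mul_left _ (by omega)
        rw [hwi, one_mul] at hsplit
        omega
      have hab : a ≤ b := by
        rw [Finsupp.le_def]
        intro t
        rcases lt_trichotomy t i with ht | ht | ht
        · have htj0 : t < j0 := lt_of_lt_of_le ht hij0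
          rw [hazero t htj0]
          exact Nat.zero_le _
        · rw [ht]
          have : a i ≤ d := haid
          omega
        · rw [hbj t ht]
          exact (hccb t ht).1
      refine ⟨b, ?_, ?_⟩
      · rw [Set.Finite.mem_toFinset]
        exact ⟨⟨hbMD, hbz, hbi1⟩, hab⟩
      · funext j
        show (if i < j then b j else 0) = cc j
        by_cases hj : i < j
        · rw [if_pos hj, hbj j hj]
        · rw [if_neg hj, (hccz j hj)]


end
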